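/- Let G be a group with finite generating set X. If for some n ≥ 1 there exist x, y in the ball B(n) of radius n (with respect to the word metric d_X, centered at the identity) with d_X(x,y) = 2 such that every path from x to y in the Cayley graph that stays within B(n) has length at least 2n, then there exists a path of length exactly 2n from x to y staying in B(n) and passing through the identity. -/

import Mathlib

variable {G : Type*} [Group G]

/-- Word length of `g` with respect to the generating set `X` (generators and inverses allowed). -/
noncomputable def wLen (X : Set G) (g : G) : ℕ :=
  sInf {n | ∃ w : List G, (∀ s ∈ w, s ∈ X ∨ s⁻¹ ∈ X) ∧ w.prod = g ∧ w.length = n}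

/-- Word metric associated to `X`. -/
noncomputable def wDist (X : Set G) (g h : G) : ℕ := wLen X (g⁻¹ * h)

/-- One step in the Cayley graph of `(G, X)`. -/
def IsStep (X : Set G) (a b : G) : Prop := ∃ s, (s ∈ X ∨ s⁻¹ ∈ X) ∧ b = a * s

/-- A (nonempty) edge path in the Cayley graph, recorded as its list of vertices. -/
def IsPath (X : Set G) (p : List G) : Prop := p ≠ [] ∧ List.Chain' (IsStep X) p

/-- The path stays in the ball of radius `n` about the identity. -/
def InBall (X : Set G) (n : ℕ) (p : List G) : Prop := ∀ a ∈ p, wLen X a ≤ n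

/-- Length (number of edges) of a path given by its vertex list. -/
def pLen (p : List G) : ℕ := p.length - 1

/-- vertices of the path starting at `a` reading the word `w` -/
def pp (a : G) : List G → List G
  | [] => [a]
  | s :: w => a :: pp (a * s) w

lemma pp_ne_nil (a : G) (w : List G) : pp a w ≠ [] := by
  cases w <;> simp [pp]

lemma head?_pp (a : G) (w : List G) : (pp a w).head? = some a := by
  cases w <;> simp [pp]

lemma getLast?_pp (a : G) (w : List G) : (pp a w).getLast? = some (a * w.prod) := by
  induction w generalizing a with
  | nil => simp [pp]
  | cons s w ih =>
    rw [pp, List.getLast?_cons, ih]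
    simp [mul_assoc]

lemma length_pp (a : G) (w : List G) : (pp a w).length = w.length + 1 := by
  induction w generalizing a with
  | nil => simp [pp]
  | cons s w ih => simp [pp, ih]

lemma mem_pp {a b : G} {w : List G} (hb : b ∈ pp a w) :
    ∃ t, t <+: w ∧ b = a * t.prod := by
  induction w generalizing a with
  | nil => simp_all [pp]
  | cons s w ih =>
    rw [pp, List.mem_cons] at hb
    rcases hb with rfl | hb
    · exact ⟨[], by simp⟩
    · obtain ⟨t, ht, rfl⟩ := ih hb
      exact ⟨s :: t, by simpa using ht, by simp [mul_assoc]⟩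

lemma chain'_pp (X : Set G) (a : G) {w : List G} (hw : ∀ s ∈ w, s ∈ X ∨ s⁻¹ ∈ X) :
    List.Chain' (IsStep X) (pp a w) := by
  induction w generalizing a with
  | nil => simp [pp, List.Chain']
  | cons s w ih =>
    rw [pp, List.Chain', List.isChain_cons]
    refine ⟨?_, ih _ (fun t ht => hw t (by simp [ht]))⟩
    intro y hy
    rw [head?_pp] at hy
    exact ⟨s, hw s (by simp), by simpa using hy.symm⟩

lemma isStep_symm {X : Set G} {a b : G} (h : IsStep X a b) : IsStep X b a := by
  obtain ⟨s, hs, rfl⟩ := h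
  exact ⟨s⁻¹, by simpa using hs.symm, by group⟩

lemma wLen_set_nonempty (X : Set G) (hXgen : Subgroup.closure X = ⊤) (g : G) :
    {n | ∃ w : List G, (∀ s ∈ w, s ∈ X ∨ s⁻¹ ∈ X) ∧ w.prod = g ∧ w.length = n}.Nonempty := by
  have hg : g ∈ Subgroup.closure X := hXgen ▸ Subgroup.mem_top g
  induction hg using Subgroup.closure_induction with
  | mem s hs => exact ⟨1, [s], by simpa using Or.inl hs⟩
  | one => exact ⟨0, [], by simp⟩
  | mul u v _ _ hu hv =>
    obtain ⟨_, wu, hwu, hpu, rfl⟩ := hu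
    obtain ⟨_, wv, hwv, hpv, rfl⟩ := hv
    exact ⟨_, wu ++ wv, fun s hs => (List.mem_append.1 hs).elim (hwu s) (hwv s),
      by simp [hpu, hpv], rfl⟩
  | inv u _ hu =>
    obtain ⟨_, wu, hwu, hpu, rfl⟩ := hu
    refine ⟨wu.length, (wu.map (·⁻¹)).reverse, ?_, by simp [hpu, List.prod_reverse_noncomm], by simp⟩
    intro s hs
    simp only [List.mem_reverse, List.mem_map] at hs
    obtain ⟨t, ht, rfl⟩ := hs
    simpa using (hwu t ht).symm

lemma wLen_spec (X : Set G) (hXgen : Subgroup.closure X = ⊤) (g : G) :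
    ∃ w : List G, (∀ s ∈ w, s ∈ X ∨ s⁻¹ ∈ X) ∧ w.prod = g ∧ w.length = wLen X g :=
  Nat.sInf_mem (wLen_set_nonempty X hXgen g)

lemma wLen_le (X : Set G) {g : G} {w : List G} (hw : ∀ s ∈ w, s ∈ X ∨ s⁻¹ ∈ X)
    (hp : w.prod = g) : wLen X g ≤ w.length :=
  Nat.sInf_le ⟨w, hw, hp, rfl⟩

lemma one_mem_pp (w : List G) : (1 : G) ∈ pp 1 w := by
  cases w <;> simp [pp]

theorem stmt4_aux (X : Set G) (hXgen : Subgroup.closure X = ⊤)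
    (n : ℕ) (x y : G)
    (hx : wLen X x ≤ n) (hy : wLen X y ≤ n)
    (hpaths : ∀ p : List G, (p ≠ [] ∧ List.Chain' (IsStep X) p) → p.head? = some x →
      p.getLast? = some y → (∀ a ∈ p, wLen X a ≤ n) → 2 * n ≤ p.length - 1) :
    ∃ p : List G, (p ≠ [] ∧ List.Chain' (IsStep X) p) ∧ p.head? = some x ∧
      p.getLast? = some y ∧ (∀ a ∈ p, wLen X a ≤ n) ∧ p.length - 1 = 2 * n ∧ (1 : G) ∈ p := by
  obtain ⟨wx, hwx, hpx, hlx⟩ := wLen_spec X hXgen x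
  obtain ⟨wy, hwy, hpy, hly⟩ := wLen_spec X hXgen y
  set q₁ : List G := (pp 1 wx).reverse with hq₁
  set q₂t : List G := (pp 1 wy).tail with hq₂t
  set p : List G := q₁ ++ q₂t with hp
  have hq₁ne : q₁ ≠ [] := by simp [hq₁, pp_ne_nil]
  have hq₁last : q₁.getLast? = some 1 := by
    rw [hq₁, List.getLast?_reverse, head?_pp]
  have hq₁chain : List.Chain' (IsStep X) q₁ := by
    rw [hq₁, List.Chain', List.isChain_reverse]
    exact List.IsChain.imp (fun a b h => isStep_symm h) (chain'_pp X 1 hwx)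
  have hq2 : List.Chain' (IsStep X) q₂t ∧ ∀ z ∈ q₂t.head?, IsStep X 1 z := by
    cases wy with
    | nil => simp [hq₂t, pp, List.Chain']
    | cons s w' =>
      have : q₂t = pp (1 * s) w' := by simp [hq₂t, pp]
      rw [this]
      refine ⟨chain'_pp X _ (fun t ht => hwy t (by simp [ht])), ?_⟩
      intro z hz
      rw [head?_pp] at hz
      exact ⟨s, hwy s (by simp), by simpa using hz.symm⟩
  have hchain : List.Chain' (IsStep X) p :=
    List.IsChain.append hq₁chain hq2.1 (by
      intro u hu z hz
      rw [hq₁last, Option.mem_some_iff] at hu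
      subst hu
      exact hq2.2 z hz)
  have hpne : p ≠ [] := by simp [hp, hq₁ne]
  have hhead : p.head? = some x := by
    rw [hp, List.head?_append_of_ne_nil _ hq₁ne, hq₁, List.head?_reverse, getLast?_pp,
      one_mul, hpx]
  have hlast : p.getLast? = some y := by
    cases wy with
    | nil => simp_all [hp, hq₂t, pp]
    | cons s w' =>
      have h2 : q₂t = pp (1 * s) w' := by simp [hq₂t, pp]
      have h2ne : q₂t ≠ [] := h2 ▸ pp_ne_nil _ _
      rw [hp, List.getLast?_append_of_ne_nil _ h2ne, h2, getLast?_pp]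
      rw [← hpy]
      simp [mul_assoc]
  have hball : ∀ a ∈ p, wLen X a ≤ n := by
    intro a ha
    rw [hp, List.mem_append] at ha
    have key : ∀ (w : List G), (∀ s ∈ w, s ∈ X ∨ s⁻¹ ∈ X) → w.length ≤ n →
        a ∈ pp 1 w → wLen X a ≤ n := by
      intro w hw hwn haw
      obtain ⟨t, ht, rfl⟩ := mem_pp haw
      rw [one_mul]
      calc wLen X t.prod ≤ t.length :=
            wLen_le X (fun s hs => hw s (ht.sublist.mem hs)) rfl
        _ ≤ w.length := ht.sublist.length_le
        _ ≤ n := hwn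
    rcases ha with ha | ha
    · exact key wx hwx (hlx ▸ hx) (List.mem_reverse.1 (hq₁ ▸ ha))
    · exact key wy hwy (hly ▸ hy) (List.mem_of_mem_tail (hq₂t ▸ ha))
  have hlen : p.length - 1 = wx.length + wy.length := by
    rw [hp, List.length_append, hq₁, List.length_reverse, length_pp, hq₂t,
      List.length_tail, length_pp]
    omega
  have hge : 2 * n ≤ p.length - 1 := hpaths p ⟨hpne, hchain⟩ hhead hlast hball
  have hle : p.length - 1 ≤ 2 * n := by
    rw [hlen]
    have h1 : wx.length ≤ n := hlx ▸ hx
    have h2 : wy.length ≤ n := hly ▸ hy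
    omega
  refine ⟨p, ⟨hpne, hchain⟩, hhead, hlast, hball, le_antisymm hle hge, ?_⟩
  rw [hp, List.mem_append]
  exact Or.inl (by rw [hq₁, List.mem_reverse]; exact one_mem_pp wx)

/-- If `x, y ∈ B(n)` with `d_X(x,y) = 2` and every path between them inside `B(n)`
has length at least `2n`, then there is a path of length exactly `2n` from `x` to `y`
inside `B(n)` passing through the identity. -/
theorem stmt4 (X : Set G) (hXfin : X.Finite) (hXgen : Subgroup.closure X = ⊤)
    (n : ℕ) (hn : 1 ≤ n) (x y : G)
    (hx : wLen X x ≤ n) (hy : wLen X y ≤ n) (hd : wDist X x y = 2)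
    (hpaths : ∀ p : List G, IsPath X p → p.head? = some x → p.getLast? = some y →
      InBall X n p → 2 * n ≤ pLen p) :
    ∃ p : List G, IsPath X p ∧ p.head? = some x ∧ p.getLast? = some y ∧
      InBall X n p ∧ pLen p = 2 * n ∧ (1 : G) ∈ p := by
  exact stmt4_aux X hXgen n x y hx hy hpaths
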